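/- (Normal form for pure virtual braids.) For every n ≥ 2 and every b ∈ VP_n, there exist elements w_2, w_3, …, w_n with w_j ∈ W_j for each j such that b = w_2 w_3 ⋯ w_n, where W_j ⊆ VP_n denotes the image under the natural inclusion ι_{j,n} : VP_j → VP_n (determined by λ_{ab} ↦ λ_{ab}) of the subgroup V_j^*, the normal closure in VP_j of {λ_{ij}, λ_{ji} : 1 ≤ i ≤ j−1}. -/
import Mathlib


/-- Generators of the pure virtual braid group `VP n`: ordered pairs of distinct
indices, the pair `(i, j)` corresponding to the generator `λ_{ij}`. -/
def Gen (n : ℕ) : Type := {p : Fin n × Fin n // p.1 ≠ p.2}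

instance (n : ℕ) : DecidableEq (Gen n) :=
  fun a b => decidable_of_iff (a.1 = b.1) Subtype.ext_iff.symm

/-- The generator `λ_{ij}` inside the free group on the generators. -/
def lamF {n : ℕ} {i j : Fin n} (h : i ≠ j) : FreeGroup (Gen n) :=
  FreeGroup.of ⟨(i, j), h⟩

/-- `s(ab) = 1` if `a < b`, and `-1` otherwise. -/
def sgn {n : ℕ} (a b : Fin n) : ℤ := if a < b then 1 else -1

/-- The defining relators of the pure virtual braid group `VP n`:
(1) `λ_{jk} λ_{im} = λ_{im} λ_{jk}` for pairwise distinct `i, j, k, m`;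
(2) `λ_{ki}^{s(ki)} λ_{kj}^{s(kj)} λ_{ij}^{s(ij)} = λ_{ij}^{s(ij)} λ_{kj}^{s(kj)} λ_{ki}^{s(ki)}`
for pairwise distinct `i, j, k`. -/
def vpRels (n : ℕ) : Set (FreeGroup (Gen n)) :=
  {r | ∃ (i j k m : Fin n) (hjk : j ≠ k) (him : i ≠ m),
      i ≠ j ∧ i ≠ k ∧ j ≠ m ∧ k ≠ m ∧
      r = lamF hjk * lamF him * (lamF hjk)⁻¹ * (lamF him)⁻¹} ∪
  {r | ∃ (i j k : Fin n) (hki : k ≠ i) (hkj : k ≠ j) (hij : i ≠ j),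
      r = (lamF hki ^ sgn k i * lamF hkj ^ sgn k j * lamF hij ^ sgn i j) *
          (lamF hij ^ sgn i j * lamF hkj ^ sgn k j * lamF hki ^ sgn k i)⁻¹}

/-- The pure virtual braid group on `n` strands, as a presented group. -/
abbrev VP (n : ℕ) : Type := PresentedGroup (vpRels n)

/-- The generator `λ_{ij}` of `VP n`. -/
def lam {n : ℕ} {i j : Fin n} (h : i ≠ j) : VP n := PresentedGroup.of ⟨(i, j), h⟩

/-- The last index `j` (in one-based numbering) of `Fin j`. -/
def lastIdx (j : ℕ) (hj : 0 < j) : Fin j := ⟨j - 1, by omega⟩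

/-- The set `{λ_{ij}, λ_{ji} : 1 ≤ i ≤ j−1}` in `VP j`, whose normal closure is `V_j^*`. -/
def VstarSet (j : ℕ) (hj : 0 < j) : Set (VP j) :=
  {x | ∃ (i : Fin j) (hi : i ≠ lastIdx j hj), x = lam hi ∨ x = lam hi.symm}

/-! ### Auxiliary constructions for the proof -/

namespace Stmt5Aux

/-- The map on generators induced by `Fin.castLE`. -/
def genMap {m n : ℕ} (h : m ≤ n) (g : Gen m) : Gen n :=
  ⟨(Fin.castLE h g.1.1, Fin.castLE h g.1.2), fun he => g.2 (Fin.castLE_injective h he)⟩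

lemma lamF_map {m n : ℕ} (h : m ≤ n) {i j : Fin m} (hij : i ≠ j)
    (hij' : Fin.castLE h i ≠ Fin.castLE h j) :
    FreeGroup.map (genMap h) (lamF hij) = lamF hij' := rfl

lemma sgn_castLE {m n : ℕ} (h : m ≤ n) (a b : Fin m) :
    sgn (Fin.castLE h a) (Fin.castLE h b) = sgn a b := by
  simp only [sgn, Fin.lt_def, Fin.coe_castLE]

lemma map_mem_rels {m n : ℕ} (h : m ≤ n) {r : FreeGroup (Gen m)} (hr : r ∈ vpRels m) :
    FreeGroup.map (genMap h) r ∈ vpRels n := by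
  rcases hr with ⟨i, j, k, l, hjk, him, hij, hik, hjm, hkm, rfl⟩ |
    ⟨i, j, k, hki, hkj, hij, rfl⟩
  · refine Or.inl ⟨Fin.castLE h i, Fin.castLE h j, Fin.castLE h k, Fin.castLE h l,
      (Fin.castLE_injective h).ne hjk, (Fin.castLE_injective h).ne him,
      (Fin.castLE_injective h).ne hij, (Fin.castLE_injective h).ne hik,
      (Fin.castLE_injective h).ne hjm, (Fin.castLE_injective h).ne hkm, ?_⟩
    simp only [map_mul, map_inv]
    rw [lamF_map h hjk, lamF_map h him]
  · refine Or.inr ⟨Fin.castLE h i, Fin.castLE h j, Fin.castLE h k,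
      (Fin.castLE_injective h).ne hki, (Fin.castLE_injective h).ne hkj,
      (Fin.castLE_injective h).ne hij, ?_⟩
    simp only [map_mul, map_inv, map_zpow]
    rw [lamF_map h hki, lamF_map h hkj, lamF_map h hij, sgn_castLE, sgn_castLE, sgn_castLE]

lemma lift_eq {m n : ℕ} (h : m ≤ n) :
    FreeGroup.lift (fun g => (PresentedGroup.of (genMap h g) : VP n)) =
      (PresentedGroup.mk (vpRels n)).comp (FreeGroup.map (genMap h)) := by
  ext g
  simp [PresentedGroup.of]

/-- The natural inclusion `VP m →* VP n` for `m ≤ n`. -/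
def ιh {m n : ℕ} (h : m ≤ n) : VP m →* VP n :=
  PresentedGroup.toGroup (f := fun g => PresentedGroup.of (genMap h g)) (fun r hr => by
    rw [lift_eq]
    show PresentedGroup.mk (vpRels n) (FreeGroup.map (genMap h) r) = 1
    exact (QuotientGroup.eq_one_iff _).mpr
      (Subgroup.subset_normalClosure (map_mem_rels h hr)))

lemma ιh_of {m n : ℕ} (h : m ≤ n) (g : Gen m) :
    ιh h (PresentedGroup.of g) = PresentedGroup.of (genMap h g) :=
  PresentedGroup.toGroup.of _

lemma ιh_lam {m n : ℕ} (h : m ≤ n) {i j : Fin m} (hij : i ≠ j)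
    (hij' : Fin.castLE h i ≠ Fin.castLE h j) :
    ιh h (lam hij) = lam hij' :=
  ιh_of h _

lemma ιh_comp {l m n : ℕ} (h1 : l ≤ m) (h2 : m ≤ n) :
    (ιh h2).comp (ιh h1) = ιh (h1.trans h2) := by
  apply PresentedGroup.ext
  intro g
  simp only [MonoidHom.comp_apply, ιh_of]
  rfl

lemma ιh_id {n : ℕ} (h : n ≤ n) : ιh h = MonoidHom.id (VP n) := by
  apply PresentedGroup.ext
  intro g
  simp only [ιh_of, MonoidHom.id_apply]
  rfl

end Stmt5Aux
namespace Stmt5Aux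

lemma base_gen (g : Gen 2) : (PresentedGroup.of g : VP 2) ∈ VstarSet 2 (by omega) := by
  obtain ⟨⟨i, j⟩, hij⟩ := g
  have hlast : lastIdx 2 (by omega) = (1 : Fin 2) := rfl
  fin_cases i <;> fin_cases j
  · exact absurd rfl hij
  · exact ⟨0, by decide, Or.inl rfl⟩
  · exact ⟨0, by decide, Or.inr rfl⟩
  · exact absurd rfl hij

lemma vstar2_top : Subgroup.normalClosure (VstarSet 2 (by omega)) = ⊤ := by
  rw [eq_top_iff]
  intro b _
  exact PresentedGroup.generated_by _ _
    (fun g => Subgroup.subset_normalClosure (base_gen g)) b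

lemma split (n : ℕ) (b : VP (n + 1)) :
    ∃ (c : VP n) (v : VP (n + 1)),
      v ∈ Subgroup.normalClosure (VstarSet (n + 1) (by omega)) ∧
      b = ιh (Nat.le_succ n) c * v := by
  set N := Subgroup.normalClosure (VstarSet (n + 1) (by omega : 0 < n + 1)) with hN
  have hnorm : N.Normal := Subgroup.normalClosure_normal
  let ι := ιh (Nat.le_succ n)
  let S : Subgroup (VP (n + 1)) :=
    { carrier := {b | ∃ c v, v ∈ N ∧ b = ι c * v}
      one_mem' := ⟨1, 1, one_mem N, by simp⟩
      mul_mem' := by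
        rintro x y ⟨c1, v1, h1, rfl⟩ ⟨c2, v2, h2, rfl⟩
        refine ⟨c1 * c2, (ι c2)⁻¹ * v1 * ι c2 * v2,
          mul_mem (by simpa using hnorm.conj_mem v1 h1 (ι c2)⁻¹) h2, ?_⟩
        simp only [map_mul]
        group
      inv_mem' := by
        intro x hx
        obtain ⟨c, v, hv, rfl⟩ := hx
        refine ⟨c⁻¹, ι c * v⁻¹ * (ι c)⁻¹, hnorm.conj_mem v⁻¹ (inv_mem hv) (ι c), ?_⟩
        simp only [map_inv]
        group }
  suffices hb : b ∈ S by exact hb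
  apply PresentedGroup.generated_by _ S
  intro g
  obtain ⟨⟨i, j⟩, hij⟩ := g
  show ∃ c v, v ∈ N ∧ (PresentedGroup.of ⟨(i, j), hij⟩ : VP (n+1)) = ι c * v
  by_cases hi : (i : ℕ) < n <;> by_cases hj : (j : ℕ) < n
  · have hij' : (⟨(i : ℕ), hi⟩ : Fin n) ≠ ⟨(j : ℕ), hj⟩ := by
      intro he
      have hval : (i : ℕ) = (j : ℕ) := by simpa using he
      exact hij (Fin.ext hval)
    refine ⟨PresentedGroup.of ⟨(⟨(i : ℕ), hi⟩, ⟨(j : ℕ), hj⟩), hij'⟩, 1, one_mem N, ?_⟩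
    rw [mul_one]
    rw [show (ι (PresentedGroup.of ⟨(⟨(i : ℕ), hi⟩, ⟨(j : ℕ), hj⟩), hij'⟩) : VP (n+1)) =
      PresentedGroup.of (genMap (Nat.le_succ n) ⟨(⟨(i : ℕ), hi⟩, ⟨(j : ℕ), hj⟩), hij'⟩)
      from ιh_of _ _]
    rfl
  · -- j is the last index
    have hjv : (j : ℕ) = n := by omega
    have hine : i ≠ lastIdx (n + 1) (by omega) := by
      intro he
      have := congrArg Fin.val he
      simp [lastIdx] at this
      omega
    have hje : j = lastIdx (n + 1) (by omega) := Fin.ext (by simp [lastIdx]; omega)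
    refine ⟨1, PresentedGroup.of ⟨(i, j), hij⟩, ?_, by simp⟩
    apply Subgroup.subset_normalClosure
    refine ⟨i, hine, Or.inl ?_⟩
    show _ = PresentedGroup.of _
    exact congrArg PresentedGroup.of (Subtype.ext (Prod.ext rfl hje))
  · -- i is the last index
    have hjne : j ≠ lastIdx (n + 1) (by omega) := by
      intro he
      have := congrArg Fin.val he
      simp [lastIdx] at this
      omega
    have hie : i = lastIdx (n + 1) (by omega) := Fin.ext (by simp [lastIdx]; omega)
    refine ⟨1, PresentedGroup.of ⟨(i, j), hij⟩, ?_, by simp⟩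
    apply Subgroup.subset_normalClosure
    refine ⟨j, hjne, Or.inr ?_⟩
    show _ = PresentedGroup.of _
    exact congrArg PresentedGroup.of (Subtype.ext (Prod.ext hie rfl))
  · exact absurd (Fin.ext (by omega : (i : ℕ) = (j : ℕ))) hij

lemma main (n : ℕ) (hn : 2 ≤ n) : ∀ b : VP n,
    ∃ w : Fin (n - 1) → VP n,
      (∀ (k : Fin (n - 1)) (h2 : (k : ℕ) + 2 ≤ n) (h0 : 0 < (k : ℕ) + 2),
        w k ∈ (Subgroup.normalClosure (VstarSet ((k : ℕ) + 2) h0)).map (ιh h2)) ∧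
      b = (List.ofFn w).prod := by
  induction n, hn using Nat.le_induction with
  | base =>
    intro b
    refine ⟨fun _ => b, ?_, by simp [List.ofFn_succ]⟩
    intro k h2 h0
    obtain ⟨kv, hkv⟩ := k
    have hkv0 : kv = 0 := by omega
    subst hkv0
    rw [ιh_id, Subgroup.map_id]
    rw [show VstarSet (((⟨0, hkv⟩ : Fin (2 - 1)) : ℕ) + 2) h0 = VstarSet 2 (by omega)
      from rfl, vstar2_top]
    trivial
  | succ n hn IH =>
    obtain ⟨l, rfl⟩ : ∃ l, n = l + 2 := ⟨n - 2, by omega⟩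
    intro b
    obtain ⟨c, v, hv, rfl⟩ := split (l + 2) b
    obtain ⟨w', hw', hc⟩ := IH c
    refine ⟨Fin.snoc (fun k : Fin (l + 1) => ιh (Nat.le_succ (l + 2)) (w' k)) v, ?_, ?_⟩
    · intro k h2 h0
      induction k using Fin.lastCases with
      | last =>
        rw [Fin.snoc_last]
        have : ((Fin.last (l + 1) : Fin (l + 2)) : ℕ) = l + 1 := rfl
        rw [show ιh h2 = ιh (le_refl (l + 3)) from rfl, ιh_id]
        exact Subgroup.mem_map.mpr ⟨v, hv, rfl⟩
      | cast k =>
        rw [Fin.snoc_castSucc]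
        have h2' : (k : ℕ) + 2 ≤ l + 2 := by have := k.isLt; omega
        have hmem := hw' k h2' h0
        have := Subgroup.mem_map_of_mem (ιh (Nat.le_succ (l + 2))) hmem
        rw [Subgroup.map_map, ιh_comp] at this
        exact this
    · rw [List.ofFn_succ', List.concat_eq_append, List.prod_append]
      simp only [Fin.snoc_castSucc, Fin.snoc_last, List.prod_cons, List.prod_nil, mul_one]
      congr 1
      rw [hc, map_list_prod, List.map_ofFn]
      rfl

end Stmt5Aux

/-- Normal form for pure virtual braids: for `n ≥ 2`, there are natural inclusions
`ι_{j,n} : VP j →* VP n` (determined by `λ_{ab} ↦ λ_{ab}`, here indexed so that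
`j = k + 2` for `k : Fin (n-1)`, i.e. `2 ≤ j ≤ n`), and every `b ∈ VP n` factors as
`b = w_2 w_3 ⋯ w_n` with each `w_j` in `W_j`, the image under `ι_{j,n}` of the
subgroup `V_j^*` (the normal closure in `VP j` of `{λ_{ij}, λ_{ji} : 1 ≤ i ≤ j−1}`). -/
theorem stmt_5 (n : ℕ) (hn : 2 ≤ n) (b : VP n) :
    ∃ ι : (k : Fin (n - 1)) → VP ((k : ℕ) + 2) →* VP n,
      (∀ (k : Fin (n - 1)) (a c : Fin ((k : ℕ) + 2)) (hac : a ≠ c)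
        (hac' : Fin.castLE (by have := k.isLt; omega : (k : ℕ) + 2 ≤ n) a ≠
          Fin.castLE (by have := k.isLt; omega) c),
        ι k (lam hac) = lam hac') ∧
      ∃ w : Fin (n - 1) → VP n,
        (∀ k : Fin (n - 1), w k ∈ (Subgroup.normalClosure (VstarSet ((k : ℕ) + 2) (by omega))).map (ι k)) ∧
        b = (List.ofFn w).prod := by
  refine ⟨fun k => Stmt5Aux.ιh (by have := k.isLt; omega), ?_, ?_⟩
  · intro k a c hac hac'
    exact Stmt5Aux.ιh_lam _ hac hac'
  · obtain ⟨w, hw, hb⟩ := Stmt5Aux.main n hn b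
    exact ⟨w, fun k => hw k (by have := k.isLt; omega) (by omega), hb⟩
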